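/- arXiv:2102.10088 — 2 statements merged into one kernel-verified Lean document; each statement's English description precedes it below -/
import Mathlib

section
/- Let X be a Haar system space. Then the Haar system (h_I)_{I∈D^+}, in the linear order where h_∅ comes first and then levels in the usual order, is a monotone Schauder basis of X. -/
open MeasureTheory Filter Set
open scoped ENNReal

noncomputable section
open Classical

/-- The dyadic interval of level `n` and position `i`. -/
def dyI (n i : ℕ) : Set ℝ := Set.Ico ((i : ℝ) / 2 ^ n) ((i + 1 : ℝ) / 2 ^ n)

/-- The Haar function of the dyadic interval of level `n`, position `i`. -/
def haarFn (n i : ℕ) : ℝ → ℝ := fun x =>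
  if x ∈ dyI (n + 1) (2 * i) then 1 else if x ∈ dyI (n + 1) (2 * i + 1) then -1 else 0

/-- Indexing of `D⁺`: `none` is the "empty" index `∅`, `some (n, i)` a dyadic interval. -/
def haarP : Option (ℕ × ℕ) → ℝ → ℝ
  | none => (Set.Ico (0 : ℝ) 1).indicator 1
  | some (n, i) => haarFn n i

/-- The interval supporting a given index of `D⁺` (with the convention that `∅` is
supported on `[0,1)`). -/
def suppI : Option (ℕ × ℕ) → Set ℝ
  | none => Set.Ico (0 : ℝ) 1
  | some p => dyI p.1 p.2

def lenI : Option (ℕ × ℕ) → ℝ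
  | none => 1
  | some (n, _i) => 1 / 2 ^ n

def validIdx : Option (ℕ × ℕ) → Prop
  | none => True
  | some (n, i) => i < 2 ^ n

/-- The position of the `k`-th member of a branch determined by signs `θ`
(`θ k = true` means the branch turns to the left half at step `k`). -/
def branchPos (θ : ℕ → Bool) : ℕ → ℕ
  | 0 => 0
  | 1 => 0
  | k + 2 => 2 * branchPos θ (k + 1) + (if θ (k + 1) then 0 else 1)

/-- The `k`-th member `I_k` of the branch determined by `θ`, as an index in `D⁺`. -/
def branchI (θ : ℕ → Bool) (k : ℕ) : Option (ℕ × ℕ) :=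
  if k = 0 then none else some (k - 1, branchPos θ k)

/-- The sign `θ_k`, with the convention `θ_0 = 1`. -/
def branchSgn (θ : ℕ → Bool) (k : ℕ) : ℝ :=
  if k = 0 then 1 else if θ k then 1 else -1

/-- The weight `|I_k|⁻¹`, with the convention `|I_0|⁻¹ = |∅|⁻¹ = 1`. -/
def branchWt (k : ℕ) : ℝ := if k = 0 then 1 else 2 ^ (k - 1)

/-- `B_k = I_k \ I_{k+1}`. -/
def branchB (θ : ℕ → Bool) (k : ℕ) : Set ℝ := suppI (branchI θ k) \ suppI (branchI θ (k + 1))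


/-- Lebesgue measure restricted to `[0,1)`. -/
def mu01 : Measure ℝ := volume.restrict (Set.Ico 0 1)

lemma mu01_ne_top (s : Set ℝ) : mu01 s ≠ ⊤ := by
  refine ne_top_of_le_ne_top ?_ (measure_mono (Set.subset_univ s))
  have : mu01 Set.univ = volume (Set.Ico (0:ℝ) 1) := by
    simp [mu01]
  rw [this, Real.volume_Ico]
  exact ENNReal.ofReal_ne_top

/-- indicator of a measurable set, as an element of `L₁[0,1)`. -/
def indL1 (s : Set ℝ) (hs : MeasurableSet s) : Lp ℝ 1 mu01 :=
  indicatorConstLp 1 hs (mu01_ne_top s) (1 : ℝ)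

/-- The Haar system as elements of `L₁[0,1)`, indexed by `D⁺`. -/
def haarL1 : Option (ℕ × ℕ) → Lp ℝ 1 mu01
  | none => indL1 (Set.Ico (0 : ℝ) 1) measurableSet_Ico
  | some (n, i) => indL1 (dyI (n + 1) (2 * i)) measurableSet_Ico
      - indL1 (dyI (n + 1) (2 * i + 1)) measurableSet_Ico

section Tensor

variable {X : Type*} [NormedAddCommGroup X] [NormedSpace ℝ X]

/-- the elementary tensor `f ⊗ x` as an element of the Bochner space `L₁([0,1); X)`. -/
def tensorL1 (f : Lp ℝ 1 mu01) (x : X) : Lp X 1 mu01 :=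
  ((L1.integrable_coeFn f).smul_const x).toL1 _

/-- For an operator `T` on `L₁(X)`, a functional `g ∈ X*` and a vector `x ∈ X`, the operator
`T^{(g,x)} : L₁ → L₁` defined by `⟨e*, T^{(g,x)} e⟩ = ⟨e* ⊗ g, T (e ⊗ x)⟩`; concretely
`T^{(g,x)} e = (s ↦ g ((T (e ⊗ x)) s))`. -/
def entryFun (T : Lp X 1 mu01 →L[ℝ] Lp X 1 mu01) (g : X →L[ℝ] ℝ) (x : X)
    (f : Lp ℝ 1 mu01) : Lp ℝ 1 mu01 :=
  (g.integrable_comp (L1.integrable_coeFn (T (tensorL1 f x)))).toL1 _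

end Tensor

/-- the linear span `Z` of the indicators of dyadic intervals. -/
def dyadicSpan : Submodule ℝ (ℝ → ℝ) :=
  Submodule.span ℝ {f | ∃ n i, i < 2 ^ n ∧ f = (dyI n i).indicator 1}

/-- A Haar system space norm: a norm on the span `Z` of the dyadic indicators which is
invariant under equidistribution and gives `χ_{[0,1)}` norm one.  The corresponding Haar
system space is the completion of `Z` under this norm. -/
structure HaarSystemNorm where
  N : (ℝ → ℝ) → ℝ
  nonneg : ∀ f, 0 ≤ N f
  add_le : ∀ f g, f ∈ dyadicSpan → g ∈ dyadicSpan → N (f + g) ≤ N f + N g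
  smul_eq : ∀ (c : ℝ) f, f ∈ dyadicSpan → N (c • f) = |c| * N f
  eq_zero : ∀ f, f ∈ dyadicSpan → N f = 0 → f = 0
  distrib_inv : ∀ f g, f ∈ dyadicSpan → g ∈ dyadicSpan →
    (∀ t : ℝ, volume {x | t < |f x|} = volume {x | t < |g x|}) → N f = N g
  norm_one : N ((Set.Ico (0 : ℝ) 1).indicator 1) = 1

/-- A realization of the Haar system space determined by a Haar system norm:
a Banach space `X` together with a linear embedding `j` of the span of the dyadic
indicators, which is isometric on the span and has dense range. -/
structure HaarSystemSpace (X : Type*) [NormedAddCommGroup X] [NormedSpace ℝ X] where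
  hn : HaarSystemNorm
  j : (ℝ → ℝ) →ₗ[ℝ] X
  norm_j : ∀ f ∈ dyadicSpan, ‖j f‖ = hn.N f
  dense_j : DenseRange (fun f : dyadicSpan => j f)

/-- the `X`-normalized Haar system `μ_L h_L` in a Haar system space. -/
def HaarSystemSpace.e {X : Type*} [NormedAddCommGroup X] [NormedSpace ℝ X]
    (H : HaarSystemSpace X) (L : Option (ℕ × ℕ)) : X :=
  ‖H.j ((suppI L).indicator 1)‖⁻¹ • H.j (haarP L)

section Factors

variable {X : Type*} [NormedAddCommGroup X] [NormedSpace ℝ X]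

/-- `T` is a `C`-factor of `S` with error `ε`. -/
def IsFactor (C ε : ℝ) (T S : X →L[ℝ] X) : Prop :=
  ∃ A B : X →L[ℝ] X, ‖B.comp (T.comp A) - S‖ ≤ ε ∧ ‖A‖ * ‖B‖ ≤ C

/-- `T` is a `C`-projectional factor of `S` with error `ε`: here `A : X → Y ⊆ X` is the
isomorphism onto a complemented subspace and `B = A⁻¹P` where `P` is the projection,
so that `B ∘ A = Id`. -/
def IsProjFactor (C ε : ℝ) (T S : X →L[ℝ] X) : Prop :=
  ∃ A B : X →L[ℝ] X, B.comp A = ContinuousLinearMap.id ℝ X ∧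
    ‖B.comp (T.comp A) - S‖ ≤ ε ∧ ‖A‖ * ‖B‖ ≤ C

end Factors

/-- the `n`-th Rademacher function `r_n = ∑_{L ∈ D_n} h_L`. -/
def rademacherFn (n : ℕ) : ℝ → ℝ := fun x => ∑ i ∈ Finset.range (2 ^ n), haarFn n i x

/-- Enumeration of the Haar system in the usual linear order `ι`
(`haarEnum 1 = h_∅`, `haarEnum 2 = h_{[0,1)}`, then level by level). -/
def haarEnum : ℕ → ℝ → ℝ := fun m =>
  if m ≤ 1 then (Set.Ico (0 : ℝ) 1).indicator 1
  else haarFn (Nat.log 2 (m - 1)) (m - 2 ^ Nat.log 2 (m - 1) - 1)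

/-- extraction of binary digits: `digitsFn x k` records whether the `k`-th digit of `x`
is `0`, i.e. whether the branch through `x` turns left at step `k`. -/
def digitsFn (x : ℝ) : ℕ → Bool := fun k => decide (⌊x * 2 ^ k⌋ % 2 = 0)

/-- the coin-tossing measure on the space of branches `[D⁺] ≃ {-1,1}^ℕ`, realized as the
image of Lebesgue measure on `[0,1)` under the binary-digit identification. -/
def muBr : Measure (ℕ → Bool) := Measure.map digitsFn mu01

/-- `h_Γ^θ = ∑_{J ∈ Γ} θ_J h_J` for a finite collection `Γ` of dyadic intervals. -/
def hGamma (Γ : Finset (ℕ × ℕ)) (θ : ℕ × ℕ → Bool) : ℝ → ℝ :=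
  fun x => ∑ J ∈ Γ, (if θ J then (1:ℝ) else -1) * haarFn J.1 J.2 x

/-- `Γ* = ∪ {I : I ∈ Γ}`. -/
def GammaStar (Γ : Finset (ℕ × ℕ)) : Set ℝ := ⋃ J ∈ Γ, dyI J.1 J.2

/-- `|Γ*|`, the total length of a disjoint finite collection of dyadic intervals. -/
def lenGamma (Γ : Finset (ℕ × ℕ)) : ℝ := ∑ J ∈ Γ, (1 : ℝ) / 2 ^ J.1


section Stmt13Aux

local notation "w" n => (1:ℝ)/2^(n+1)

lemma st13_two_pow_pos (n : ℕ) : (0:ℝ) < 2 ^ n := by positivity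

lemma st13_mem_dyI_iff {n i : ℕ} {x : ℝ} :
    x ∈ dyI n i ↔ (i:ℝ) * (1/2^n) ≤ x ∧ x < ((i:ℝ)+1) * (1/2^n) := by
  have h1 : (i:ℝ)/2^n = (i:ℝ) * (1/2^n) := by ring
  have h2 : ((i:ℝ)+1)/2^n = ((i:ℝ)+1) * (1/2^n) := by ring
  rw [dyI, Set.mem_Ico, h1, h2]

lemma st13_halve (n : ℕ) : (1:ℝ)/2^n = 2 * (1/2^(n+1)) := by
  rw [pow_succ]; ring

lemma st13_dyI_mem_unique {n i i' : ℕ} {x : ℝ} (h : x ∈ dyI n i) (h' : x ∈ dyI n i') :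
    i = i' := by
  rw [st13_mem_dyI_iff] at h h'
  have hp : (0:ℝ) < 1/2^n := by positivity
  have h1 : (i:ℝ) < (i':ℝ) + 1 := by
    by_contra hc
    push_neg at hc
    have : ((i':ℝ)+1) * (1/2^n) ≤ (i:ℝ) * (1/2^n) := by
      apply mul_le_mul_of_nonneg_right hc hp.le
    linarith [h.1, h'.2]
  have h2 : (i':ℝ) < (i:ℝ) + 1 := by
    by_contra hc
    push_neg at hc
    have : ((i:ℝ)+1) * (1/2^n) ≤ (i':ℝ) * (1/2^n) := by
      apply mul_le_mul_of_nonneg_right hc hp.le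
    linarith [h.2, h'.1]
  have h1' : i < i' + 1 := by exact_mod_cast h1
  have h2' : i' < i + 1 := by exact_mod_cast h2
  omega

lemma st13_dyI_subset01 {n i : ℕ} (hi : i < 2^n) : dyI n i ⊆ Set.Ico (0:ℝ) 1 := by
  intro x hx
  rw [st13_mem_dyI_iff] at hx
  have hp : (0:ℝ) < 1/2^n := by positivity
  constructor
  · have : (0:ℝ) ≤ (i:ℝ) * (1/2^n) := by positivity
    linarith [hx.1]
  · have h1 : ((i:ℝ)+1) ≤ 2^n := by
      have : (i:ℝ)+1 ≤ (2^n : ℕ) := by exact_mod_cast hi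
      simpa using this
    have : ((i:ℝ)+1) * (1/2^n) ≤ (2^n:ℝ) * (1/2^n) := by
      apply mul_le_mul_of_nonneg_right _ hp.le
      simpa using h1
    have h2 : (2^n:ℝ) * (1/2^n) = 1 := by
      field_simp
    linarith [hx.2]

lemma st13_dyI_nested {m n j i : ℕ} (h : m ≤ n) {x : ℝ} (hx : x ∈ dyI n i)
    (hxj : x ∈ dyI m j) : dyI n i ⊆ dyI m j := by
  obtain ⟨d, rfl⟩ : ∃ d, n = m + d := ⟨n - m, by omega⟩
  rw [st13_mem_dyI_iff] at hx hxj
  have hp : (0:ℝ) < 1/2^(m+d) := by positivity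
  have hq : (0:ℝ) < 1/2^m := by positivity
  have key : (1:ℝ)/2^m = 2^d * (1/2^(m+d)) := by
    rw [pow_add]; field_simp
  -- integer inequalities: j * 2^d ≤ i and i + 1 ≤ (j+1) * 2^d
  have hd1 : (j:ℝ) * 2^d ≤ (i:ℝ) := by
    by_contra hc
    push_neg at hc
    have h1 : (i:ℝ) + 1 ≤ (j:ℝ) * 2^d := by
      have : (i:ℕ) + 1 ≤ j * 2^d := by
        have : (i:ℝ) < (j * 2^d : ℕ) := by push_cast; linarith
        have := Nat.cast_lt (α := ℝ).mp this
        omega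
      exact_mod_cast this
    have : ((i:ℝ)+1) * (1/2^(m+d)) ≤ ((j:ℝ) * 2^d) * (1/2^(m+d)) :=
      mul_le_mul_of_nonneg_right h1 hp.le
    have h2 : ((j:ℝ) * 2^d) * (1/2^(m+d)) = (j:ℝ) * (1/2^m) := by
      rw [key]; ring
    linarith [hx.2, hxj.1]
  have hd2 : (i:ℝ) + 1 ≤ ((j:ℝ)+1) * 2^d := by
    by_contra hc
    push_neg at hc
    have h1 : ((j:ℝ)+1) * 2^d ≤ (i:ℝ) := by
      have h0 : (j+1) * 2^d ≤ i := by
        have : ((j+1) * 2^d : ℕ) < (i:ℝ) + 1 := by push_cast; linarith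
        have : ((j+1) * 2^d : ℕ) < i + 1 := by exact_mod_cast this
        omega
      exact_mod_cast h0
    have : (((j:ℝ)+1) * 2^d) * (1/2^(m+d)) ≤ (i:ℝ) * (1/2^(m+d)) :=
      mul_le_mul_of_nonneg_right h1 hp.le
    have h2 : (((j:ℝ)+1) * 2^d) * (1/2^(m+d)) = ((j:ℝ)+1) * (1/2^m) := by
      rw [key]; ring
    linarith [hx.1, hxj.2]
  intro y hy
  rw [st13_mem_dyI_iff] at hy ⊢
  constructor
  · have : ((j:ℝ) * 2^d) * (1/2^(m+d)) ≤ (i:ℝ) * (1/2^(m+d)) :=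
      mul_le_mul_of_nonneg_right hd1 hp.le
    have h2 : ((j:ℝ) * 2^d) * (1/2^(m+d)) = (j:ℝ) * (1/2^m) := by rw [key]; ring
    linarith [hy.1]
  · have : ((i:ℝ)+1) * (1/2^(m+d)) ≤ (((j:ℝ)+1) * 2^d) * (1/2^(m+d)) :=
      mul_le_mul_of_nonneg_right hd2 hp.le
    have h2 : (((j:ℝ)+1) * 2^d) * (1/2^(m+d)) = ((j:ℝ)+1) * (1/2^m) := by rw [key]; ring
    linarith [hy.2]

lemma st13_mem_congr {m n i j : ℕ} (h : m ≤ n) {x y : ℝ}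
    (hx : x ∈ dyI n i) (hy : y ∈ dyI n i) : x ∈ dyI m j ↔ y ∈ dyI m j := by
  constructor
  · intro hxj; exact st13_dyI_nested h hx hxj hy
  · intro hyj; exact st13_dyI_nested h hy hyj hx

lemma st13_haar_const {n' i' n i : ℕ} (h : n' + 1 ≤ n) {x y : ℝ}
    (hx : x ∈ dyI n i) (hy : y ∈ dyI n i) : haarFn n' i' x = haarFn n' i' y := by
  unfold haarFn
  rw [st13_mem_congr h hx hy, st13_mem_congr h hx hy]

lemma st13_dyI_left_subset (n i : ℕ) : dyI (n+1) (2*i) ⊆ dyI n i := by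
  intro x hx
  rw [st13_mem_dyI_iff] at hx ⊢
  rw [st13_halve n]
  push_cast at hx
  constructor <;> nlinarith [hx.1, hx.2]

lemma st13_dyI_right_subset (n i : ℕ) : dyI (n+1) (2*i+1) ⊆ dyI n i := by
  intro x hx
  rw [st13_mem_dyI_iff] at hx ⊢
  rw [st13_halve n]
  push_cast at hx
  constructor <;> nlinarith [hx.1, hx.2]

lemma st13_haar_zero {n i i' : ℕ} {x : ℝ} (hx : x ∈ dyI n i) (hne : i' ≠ i) :
    haarFn n i' x = 0 := by
  unfold haarFn
  rw [if_neg, if_neg]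
  · intro hm
    exact hne (st13_dyI_mem_unique (st13_dyI_right_subset n i' hm) hx)
  · intro hm
    exact hne (st13_dyI_mem_unique (st13_dyI_left_subset n i' hm) hx)

lemma st13_dyI_split_mem {n i : ℕ} {x : ℝ} (hx : x ∈ dyI n i) :
    x ∈ dyI (n+1) (2*i) ∨ x ∈ dyI (n+1) (2*i+1) := by
  rw [st13_mem_dyI_iff] at hx
  rw [st13_halve n] at hx
  rcases lt_or_ge x ((((2*i:ℕ):ℝ)+1) * (1/2^(n+1))) with h | h
  · left; rw [st13_mem_dyI_iff]; push_cast at hx h ⊢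
    constructor <;> nlinarith [hx.1, hx.2]
  · right; rw [st13_mem_dyI_iff]; push_cast at hx h ⊢
    constructor <;> nlinarith [hx.1, hx.2]

lemma st13_flip_left_iff {n i : ℕ} {x : ℝ} :
    x ∈ dyI (n+1) (2*i) ↔ x + 1/2^(n+1) ∈ dyI (n+1) (2*i+1) := by
  rw [st13_mem_dyI_iff, st13_mem_dyI_iff]
  push_cast
  constructor <;> rintro ⟨h1, h2⟩ <;> constructor <;> nlinarith

/-- the reflection swapping the two halves of `dyI n i`. -/
def st13_flip (n i : ℕ) (x : ℝ) : ℝ :=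
  if x ∈ dyI (n+1) (2*i) then x + 1/2^(n+1)
  else if x ∈ dyI (n+1) (2*i+1) then x - 1/2^(n+1) else x

lemma st13_LR_disjoint {n i : ℕ} {x : ℝ} (hL : x ∈ dyI (n+1) (2*i))
    (hR : x ∈ dyI (n+1) (2*i+1)) : False := by
  have := st13_dyI_mem_unique hL hR; omega

lemma st13_flip_right_iff {n i : ℕ} {x : ℝ} :
    x ∈ dyI (n+1) (2*i+1) ↔ x - 1/2^(n+1) ∈ dyI (n+1) (2*i) := by
  rw [st13_flip_left_iff (n := n) (i := i) (x := x - 1/2^(n+1))]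
  simp

lemma st13_flip_mem {n i : ℕ} {x : ℝ} (hx : x ∈ dyI n i) :
    st13_flip n i x ∈ dyI n i := by
  unfold st13_flip
  rcases st13_dyI_split_mem hx with h | h
  · rw [if_pos h]
    exact st13_dyI_right_subset n i (st13_flip_left_iff.mp h)
  · have hnL : x ∉ dyI (n+1) (2*i) := fun hL => st13_LR_disjoint hL h
    rw [if_neg hnL, if_pos h]
    exact st13_dyI_left_subset n i (st13_flip_right_iff.mp h)

lemma st13_flip_eq_self {n i : ℕ} {x : ℝ} (hx : x ∉ dyI n i) :
    st13_flip n i x = x := by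
  unfold st13_flip
  rw [if_neg (fun h => hx (st13_dyI_left_subset n i h)),
    if_neg (fun h => hx (st13_dyI_right_subset n i h))]

lemma st13_haarFn_zero_outside {n i : ℕ} {x : ℝ} (hL : x ∉ dyI (n+1) (2*i))
    (hR : x ∉ dyI (n+1) (2*i+1)) : haarFn n i x = 0 := by
  unfold haarFn; rw [if_neg hL, if_neg hR]

lemma st13_haar_flip (n i : ℕ) (x : ℝ) :
    haarFn n i (st13_flip n i x) = - haarFn n i x := by
  by_cases hL : x ∈ dyI (n+1) (2*i)
  · have hflip : st13_flip n i x = x + 1/2^(n+1) := by unfold st13_flip; rw [if_pos hL]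
    have hR' : x + 1/2^(n+1) ∈ dyI (n+1) (2*i+1) := st13_flip_left_iff.mp hL
    have hnL' : x + 1/2^(n+1) ∉ dyI (n+1) (2*i) := fun h => st13_LR_disjoint h hR'
    have h1 : haarFn n i (x + 1/2^(n+1)) = -1 := by
      unfold haarFn; rw [if_neg hnL', if_pos hR']
    have h2 : haarFn n i x = 1 := by unfold haarFn; rw [if_pos hL]
    rw [hflip, h1, h2]
  · by_cases hR : x ∈ dyI (n+1) (2*i+1)
    · have hflip : st13_flip n i x = x - 1/2^(n+1) := by
        unfold st13_flip; rw [if_neg hL, if_pos hR]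
      have hL' : x - 1/2^(n+1) ∈ dyI (n+1) (2*i) := st13_flip_right_iff.mp hR
      have h1 : haarFn n i (x - 1/2^(n+1)) = 1 := by unfold haarFn; rw [if_pos hL']
      have h2 : haarFn n i x = -1 := by unfold haarFn; rw [if_neg hL, if_pos hR]
      rw [hflip, h1, h2]; norm_num
    · have hflip : st13_flip n i x = x := by unfold st13_flip; rw [if_neg hL, if_neg hR]
      rw [hflip, st13_haarFn_zero_outside hL hR]; norm_num

lemma st13_flip_measure (n i : ℕ) {f : ℝ → ℝ} (hf : Measurable f) (t : ℝ) :
    volume {x | t < |f (st13_flip n i x)|} = volume {x | t < |f x|} := by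
  set L := dyI (n+1) (2*i) with hLdef
  set R := dyI (n+1) (2*i+1) with hRdef
  have hL : MeasurableSet L := measurableSet_Ico
  have hR : MeasurableSet R := measurableSet_Ico
  set A : Set ℝ := {x | t < |f x|} with hAdef
  have hA : MeasurableSet A := measurableSet_lt measurable_const hf.abs
  have hset : {x | t < |f (st13_flip n i x)|} =
      ((fun x => x + 1/2^(n+1)) ⁻¹' (A ∩ R)) ∪
      ((fun x => x - 1/2^(n+1)) ⁻¹' (A ∩ L)) ∪ (A \ (L ∪ R)) := by
    ext x
    simp only [Set.mem_union, Set.mem_preimage, Set.mem_inter_iff, Set.mem_diff,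
      Set.mem_setOf_eq]
    by_cases hLx : x ∈ L
    · have hRx : x + 1/2^(n+1) ∈ R := st13_flip_left_iff.mp hLx
      have hnR : x ∉ R := fun h => st13_LR_disjoint hLx h
      have hnL' : x - 1/2^(n+1) ∉ L := by
        intro h
        have : x ∈ R := st13_flip_right_iff.mpr h
        exact st13_LR_disjoint hLx this
      constructor
      · intro h
        left; left
        refine ⟨?_, hRx⟩
        unfold st13_flip at h
        rwa [if_pos hLx] at h
      · rintro ((⟨h1, _⟩ | ⟨_, h2⟩) | ⟨_, h3⟩)
        · unfold st13_flip; rwa [if_pos hLx]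
        · exact absurd h2 hnL'
        · exact absurd (Or.inl hLx) h3
    · by_cases hRx : x ∈ R
      · have hLx' : x - 1/2^(n+1) ∈ L := st13_flip_right_iff.mp hRx
        have hnR' : x + 1/2^(n+1) ∉ R := by
          intro h
          have : x ∈ L := st13_flip_left_iff.mpr h
          exact hLx this
        constructor
        · intro h
          left; right
          refine ⟨?_, hLx'⟩
          unfold st13_flip at h
          rwa [if_neg hLx, if_pos hRx] at h
        · rintro ((⟨_, h2⟩ | ⟨h1, _⟩) | ⟨_, h3⟩)
          · exact absurd h2 hnR'
          · unfold st13_flip; rwa [if_neg hLx, if_pos hRx]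
          · exact absurd (Or.inr hRx) h3
      · have hnR' : x + 1/2^(n+1) ∉ R := fun h => hLx (st13_flip_left_iff.mpr h)
        have hnL' : x - 1/2^(n+1) ∉ L := fun h => hRx (st13_flip_right_iff.mpr h)
        constructor
        · intro h
          right
          refine ⟨?_, by simp [hLx, hRx]⟩
          unfold st13_flip at h
          rwa [if_neg hLx, if_neg hRx] at h
        · rintro ((⟨_, h2⟩ | ⟨_, h2⟩) | ⟨h1, _⟩)
          · exact absurd h2 hnR'
          · exact absurd h2 hnL'
          · unfold st13_flip; rwa [if_neg hLx, if_neg hRx]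
  rw [hset]
  have hm1 : MeasurableSet ((fun x : ℝ => x + 1/2^(n+1)) ⁻¹' (A ∩ R)) :=
    (hA.inter hR).preimage (measurable_add_const _)
  have hm2 : MeasurableSet ((fun x : ℝ => x - 1/2^(n+1)) ⁻¹' (A ∩ L)) :=
    (hA.inter hL).preimage (measurable_sub_const _)
  have hsub1 : ((fun x : ℝ => x + 1/2^(n+1)) ⁻¹' (A ∩ R)) ⊆ L := by
    intro x hx
    exact st13_flip_left_iff.mpr hx.2
  have hsub2 : ((fun x : ℝ => x - 1/2^(n+1)) ⁻¹' (A ∩ L)) ⊆ R := by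
    intro x hx
    exact st13_flip_right_iff.mpr hx.2
  have hd12 : Disjoint ((fun x : ℝ => x + 1/2^(n+1)) ⁻¹' (A ∩ R))
      ((fun x : ℝ => x - 1/2^(n+1)) ⁻¹' (A ∩ L)) := by
    refine Set.disjoint_left.mpr fun x h1 h2 => ?_
    exact st13_LR_disjoint (hsub1 h1) (hsub2 h2)
  have hd3 : Disjoint (((fun x : ℝ => x + 1/2^(n+1)) ⁻¹' (A ∩ R)) ∪
      ((fun x : ℝ => x - 1/2^(n+1)) ⁻¹' (A ∩ L))) (A \ (L ∪ R)) := by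
    refine Set.disjoint_left.mpr fun x h1 h2 => ?_
    rcases h1 with h1 | h1
    · exact h2.2 (Or.inl (hsub1 h1))
    · exact h2.2 (Or.inr (hsub2 h1))
  rw [measure_union hd3 (hA.diff (hL.union hR)), measure_union hd12 hm2]
  have e1 : volume ((fun x : ℝ => x + 1/2^(n+1)) ⁻¹' (A ∩ R)) = volume (A ∩ R) :=
    measure_preimage_add_right volume _ _
  have e2 : volume ((fun x : ℝ => x - 1/2^(n+1)) ⁻¹' (A ∩ L)) = volume (A ∩ L) := by
    have : (fun x : ℝ => x - 1/2^(n+1)) = (fun x : ℝ => x + -(1/2^(n+1))) := by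
      funext x; ring
    rw [this]
    exact measure_preimage_add_right volume _ _
  rw [e1, e2]
  have hAsplit : volume A = volume (A ∩ L) + volume (A ∩ R) + volume (A \ (L ∪ R)) := by
    have h1 : volume (A ∩ (L ∪ R)) + volume (A \ (L ∪ R)) = volume A :=
      measure_inter_add_diff A (hL.union hR)
    have h2 : A ∩ (L ∪ R) = (A ∩ L) ∪ (A ∩ R) := Set.inter_union_distrib_left A L R
    have h3 : Disjoint (A ∩ L) (A ∩ R) := by
      refine Set.disjoint_left.mpr fun x hx1 hx2 => ?_
      exact st13_LR_disjoint hx1.2 hx2.2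
    rw [← h1, h2, measure_union h3 (hA.inter hR)]
  rw [hAsplit]
  ring

end Stmt13Aux

section Stmt13Aux2

lemma st13_enum_spec {m : ℕ} (hm : 2 ≤ m) :
    (m - 2 ^ Nat.log 2 (m-1) - 1) < 2 ^ Nat.log 2 (m-1) ∧
    m = 2 ^ Nat.log 2 (m-1) + (m - 2 ^ Nat.log 2 (m-1) - 1) + 1 ∧
    haarEnum m = haarFn (Nat.log 2 (m-1)) (m - 2 ^ Nat.log 2 (m-1) - 1) := by
  have h1 : 2 ^ Nat.log 2 (m-1) ≤ m - 1 := Nat.pow_log_le_self 2 (by omega)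
  have h2 : m - 1 < 2 ^ (Nat.log 2 (m-1) + 1) := Nat.lt_pow_succ_log_self (by norm_num) _
  rw [pow_succ] at h2
  refine ⟨by omega, by omega, ?_⟩
  unfold haarEnum
  rw [if_neg (by omega)]

lemma st13_measurable_haarFn (n i : ℕ) : Measurable (haarFn n i) := by
  unfold haarFn
  exact Measurable.ite measurableSet_Ico measurable_const
    (Measurable.ite measurableSet_Ico measurable_const measurable_const)

lemma st13_measurable_enum (p : ℕ) : Measurable (haarEnum p) := by
  unfold haarEnum
  split
  · exact Measurable.indicator measurable_const measurableSet_Ico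
  · exact st13_measurable_haarFn _ _

lemma st13_Ico01 : Set.Ico (0:ℝ) 1 = dyI 0 0 := by
  unfold dyI; norm_num

lemma st13_ind_mem_span {n i : ℕ} (hi : i < 2^n) :
    (dyI n i).indicator (1 : ℝ → ℝ) ∈ dyadicSpan :=
  Submodule.subset_span ⟨n, i, hi, rfl⟩

lemma st13_haarFn_eq (n i : ℕ) :
    haarFn n i = (dyI (n+1) (2*i)).indicator (1 : ℝ → ℝ)
      - (dyI (n+1) (2*i+1)).indicator (1 : ℝ → ℝ) := by
  funext x
  by_cases hL : x ∈ dyI (n+1) (2*i)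
  · have hnR : x ∉ dyI (n+1) (2*i+1) := fun h => st13_LR_disjoint hL h
    simp [haarFn, hL, hnR]
  · by_cases hR : x ∈ dyI (n+1) (2*i+1)
    · simp [haarFn, hL, hR]
    · simp [haarFn, hL, hR]

lemma st13_haarFn_mem_span {n i : ℕ} (hi : i < 2^n) : haarFn n i ∈ dyadicSpan := by
  rw [st13_haarFn_eq]
  exact sub_mem (st13_ind_mem_span (by rw [pow_succ]; omega))
    (st13_ind_mem_span (by rw [pow_succ]; omega))

lemma st13_enum_mem_span {p : ℕ} (hp : 1 ≤ p) : haarEnum p ∈ dyadicSpan := by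
  rcases le_or_gt p 1 with h1 | h1
  · have : haarEnum p = (dyI 0 0).indicator (1 : ℝ → ℝ) := by
      unfold haarEnum; rw [if_pos h1, st13_Ico01]
    rw [this]
    exact st13_ind_mem_span (by norm_num)
  · obtain ⟨hi, _, he⟩ := st13_enum_spec (by omega : 2 ≤ p)
    rw [he]
    exact st13_haarFn_mem_span hi

lemma st13_sum_mem_span (c : ℕ → ℝ) (s : Finset ℕ) (hs : ∀ p ∈ s, 1 ≤ p) :
    (∑ p ∈ s, c p • haarEnum p) ∈ dyadicSpan :=
  Submodule.sum_mem _ fun p hp => Submodule.smul_mem _ _ (st13_enum_mem_span (hs p hp))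

lemma st13_N_zero (H : HaarSystemNorm) : H.N 0 = 0 := by
  have h := H.smul_eq 0 0 (Submodule.zero_mem _)
  simpa using h

/-- constancy of earlier Haar functions on the interval of the `m`-th. -/
lemma st13_enum_const {p m : ℕ} (hp1 : 1 ≤ p) (hpm : p < m) (hm : 2 ≤ m)
    {x y : ℝ} (hx : x ∈ dyI (Nat.log 2 (m-1)) (m - 2 ^ Nat.log 2 (m-1) - 1))
    (hy : y ∈ dyI (Nat.log 2 (m-1)) (m - 2 ^ Nat.log 2 (m-1) - 1)) :
    haarEnum p x = haarEnum p y := by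
  obtain ⟨hilt, hmeq, _⟩ := st13_enum_spec hm
  set n := Nat.log 2 (m-1) with hn
  set i := m - 2 ^ Nat.log 2 (m-1) - 1 with hi
  rcases le_or_gt p 1 with h1 | h1
  · have hx1 : x ∈ Set.Ico (0:ℝ) 1 := st13_dyI_subset01 hilt hx
    have hy1 : y ∈ Set.Ico (0:ℝ) 1 := st13_dyI_subset01 hilt hy
    unfold haarEnum
    rw [if_pos h1, Set.indicator_of_mem hx1, Set.indicator_of_mem hy1]
    simp
  · obtain ⟨hilt', hpeq, he'⟩ := st13_enum_spec (by omega : 2 ≤ p)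
    rw [he']
    rcases lt_or_ge (Nat.log 2 (p-1)) n with hlt | hle
    · exact st13_haar_const (by omega) hx hy
    · have hppow : 2 ^ Nat.log 2 (p-1) ≤ p - 1 := by omega
      have hclash : Nat.log 2 (p-1) ≤ n := by
        by_contra hc
        push_neg at hc
        have h2 : 2 ^ (n + 1) ≤ 2 ^ Nat.log 2 (p-1) := Nat.pow_le_pow_right (by norm_num) hc
        rw [pow_succ] at h2
        omega
      have hn'n : Nat.log 2 (p-1) = n := le_antisymm hclash hle
      have hpow : 2 ^ Nat.log 2 (p-1) = 2 ^ n := by rw [hn'n]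
      have hine : p - 2 ^ Nat.log 2 (p-1) - 1 ≠ i := by omega
      rw [hn'n] at hine ⊢
      rw [st13_haar_zero hx hine, st13_haar_zero hy hine]

lemma st13_enum_one (m : ℕ) (hm : 1 ≤ m) : ∃ x, haarEnum m x = 1 := by
  rcases le_or_gt m 1 with h1 | h1
  · refine ⟨0, ?_⟩
    unfold haarEnum
    rw [if_pos h1, Set.indicator_of_mem (by constructor <;> norm_num)]
    rfl
  · obtain ⟨hilt, hmeq, he⟩ := st13_enum_spec (by omega : 2 ≤ m)
    set n := Nat.log 2 (m-1)
    set i := m - 2 ^ Nat.log 2 (m-1) - 1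
    refine ⟨((2*i : ℕ) : ℝ) * (1/2^(n+1)), ?_⟩
    rw [he]
    have hmem : ((2*i : ℕ) : ℝ) * (1/2^(n+1)) ∈ dyI (n+1) (2*i) := by
      rw [st13_mem_dyI_iff]
      have : (0:ℝ) < 1/2^(n+1) := by positivity
      refine ⟨le_refl _, ?_⟩
      push_cast
      nlinarith
    unfold haarFn
    rw [if_pos hmem]

/-- The main inductive step. -/
lemma st13_step (H : HaarSystemNorm) (c : ℕ → ℝ) (m : ℕ) (hm : 1 ≤ m) :
    H.N (∑ p ∈ Finset.Icc 1 m, c p • haarEnum p) ≤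
      H.N (∑ p ∈ Finset.Icc 1 (m+1), c p • haarEnum p) := by
  set n := Nat.log 2 (m+1-1) with hn
  set i := m+1 - 2 ^ Nat.log 2 (m+1-1) - 1 with hi
  obtain ⟨hilt, hmeq, he⟩ := st13_enum_spec (by omega : 2 ≤ m+1)
  set g : ℝ → ℝ := ∑ p ∈ Finset.Icc 1 m, c p • haarEnum p with hg
  set S : ℝ → ℝ := ∑ p ∈ Finset.Icc 1 (m+1), c p • haarEnum p with hS
  have hSeq : S = g + c (m+1) • haarEnum (m+1) := by
    rw [hS, Finset.sum_Icc_succ_top (by omega : 1 ≤ m+1)]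
  have happly : ∀ (x : ℝ), g x = ∑ p ∈ Finset.Icc 1 m, c p * haarEnum p x := by
    intro x
    rw [hg, Finset.sum_apply]
    simp [Pi.smul_apply, smul_eq_mul]
  have hconst : ∀ x y : ℝ, x ∈ dyI n i → y ∈ dyI n i → g x = g y := by
    intro x y hx hy
    rw [happly, happly]
    refine Finset.sum_congr rfl fun p hp => ?_
    rw [Finset.mem_Icc] at hp
    rw [st13_enum_const (by omega) (by omega) (by omega) hx hy]
  have hflip_g : ∀ x, g (st13_flip n i x) = g x := by
    intro x
    by_cases hx : x ∈ dyI n i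
    · exact hconst _ _ (st13_flip_mem hx) hx
    · rw [st13_flip_eq_self hx]
  have hSflip : ∀ x, S (st13_flip n i x) = g x - c (m+1) * haarFn n i x := by
    intro x
    rw [hSeq]
    simp only [Pi.add_apply, Pi.smul_apply, smul_eq_mul]
    rw [he, hflip_g, st13_haar_flip]
    ring
  set Sf : ℝ → ℝ := fun x => S (st13_flip n i x) with hSf
  have hSfeq : Sf = g - c (m+1) • haarFn n i := by
    funext x
    simp only [hSf, Pi.sub_apply, Pi.smul_apply, smul_eq_mul]
    exact hSflip x
  have hgmem : g ∈ dyadicSpan :=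
    st13_sum_mem_span c _ (fun p hp => (Finset.mem_Icc.mp hp).1)
  have hSmem : S ∈ dyadicSpan :=
    st13_sum_mem_span c _ (fun p hp => (Finset.mem_Icc.mp hp).1)
  have hSfmem : Sf ∈ dyadicSpan := by
    rw [hSfeq]
    exact sub_mem hgmem (Submodule.smul_mem _ _ (st13_haarFn_mem_span hilt))
  have hSmeas : Measurable S := by
    have : S = fun x => ∑ p ∈ Finset.Icc 1 (m+1), c p * haarEnum p x := by
      funext x
      rw [hS, Finset.sum_apply]
      simp [Pi.smul_apply, smul_eq_mul]
    rw [this]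
    exact Finset.measurable_sum _ fun p _ => (st13_measurable_enum p).const_mul _
  have hNSf : H.N Sf = H.N S := by
    refine H.distrib_inv Sf S hSfmem hSmem fun t => ?_
    exact st13_flip_measure n i hSmeas t
  have havg : g = (1/2 : ℝ) • (S + Sf) := by
    funext x
    have h1 : S x = g x + c (m+1) * haarFn n i x := by
      rw [hSeq]
      simp only [Pi.add_apply, Pi.smul_apply, smul_eq_mul, he]
      rfl
    have h2 : Sf x = g x - c (m+1) * haarFn n i x := hSflip x
    simp only [Pi.smul_apply, Pi.add_apply, smul_eq_mul, h1, h2]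
    ring
  calc H.N g = H.N ((1/2 : ℝ) • (S + Sf)) := by rw [← havg]
    _ = |1/2| * H.N (S + Sf) := H.smul_eq _ _ (add_mem hSmem hSfmem)
    _ ≤ |1/2| * (H.N S + H.N Sf) := by
        apply mul_le_mul_of_nonneg_left (H.add_le S Sf hSmem hSfmem) (abs_nonneg _)
    _ = H.N S := by rw [hNSf]; rw [abs_of_pos (by norm_num : (0:ℝ) < 1/2)]; ring

end Stmt13Aux2


theorem statement13 (H : HaarSystemNorm) :
    (∀ (c : ℕ → ℝ) (K k : ℕ), k ≤ K →
      H.N (∑ m ∈ Finset.Icc 1 k, c m • haarEnum m) ≤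
        H.N (∑ m ∈ Finset.Icc 1 K, c m • haarEnum m)) ∧
    ∀ (c : ℕ → ℝ) (K : ℕ), (∑ m ∈ Finset.Icc 1 K, c m • haarEnum m) = 0 →
      ∀ m ∈ Finset.Icc 1 K, c m = 0 := by
  have hmono : ∀ (c : ℕ → ℝ) (K k : ℕ), k ≤ K →
      H.N (∑ m ∈ Finset.Icc 1 k, c m • haarEnum m) ≤
        H.N (∑ m ∈ Finset.Icc 1 K, c m • haarEnum m) := by
    intro c K k hk
    induction K, hk using Nat.le_induction with
    | base => exact le_refl _
    | succ K hKk ih =>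
      refine le_trans ih ?_
      rcases Nat.eq_zero_or_pos K with rfl | hKpos
      · have h0 : (Finset.Icc 1 0 : Finset ℕ) = ∅ := by decide
        rw [h0, Finset.sum_empty, st13_N_zero H]
        exact H.nonneg _
      · exact st13_step H c K hKpos
  refine ⟨hmono, ?_⟩
  intro c K hK m hm
  rw [Finset.mem_Icc] at hm
  have hzero : ∀ k, k ≤ K → (∑ p ∈ Finset.Icc 1 k, c p • haarEnum p) = 0 := by
    intro k hk
    have h1 := hmono c K k hk
    rw [hK, st13_N_zero H] at h1
    exact H.eq_zero _ (st13_sum_mem_span c _ fun p hp => (Finset.mem_Icc.mp hp).1)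
      (le_antisymm h1 (H.nonneg _))
  obtain ⟨m', rfl⟩ : ∃ m', m = m' + 1 := ⟨m - 1, by omega⟩
  have h1 := hzero (m' + 1) hm.2
  have h2 := hzero m' (by omega)
  rw [Finset.sum_Icc_succ_top (by omega : 1 ≤ m' + 1), h2, zero_add] at h1
  obtain ⟨x, hx⟩ := st13_enum_one (m' + 1) (by omega)
  have := congrFun h1 x
  rw [Pi.smul_apply, smul_eq_mul, hx, mul_one] at this
  simpa using this


end
end

section
/- Let X be a Haar system space and T : L_1(X) → L_1(X) an X-diagonal operator with entries (T^L)_{L∈D^+}. Let Γ be a finite disjoint collection of dyadic intervals with union Γ* and let θ ∈ {−1,1}^Γ. Then the operator T^{(ν_{Γ*} h_Γ^θ, μ_{Γ*} h_Γ^θ)} : L_1 → L_1 equals Σ_{L∈Γ} (|L|/|Γ*|) T^L; in particular it does not depend on the choice of signs θ. -/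
open MeasureTheory Filter Set
open scoped ENNReal

noncomputable section
open Classical

/- ### Auxiliary lemmas for statement17 -/

section AuxLp

variable {X : Type*} [NormedAddCommGroup X] [NormedSpace ℝ X]

lemma coeFn_tensorL1 (f : Lp ℝ 1 mu01) (x : X) :
    (tensorL1 f x : ℝ → X) =ᵐ[mu01] fun s => f s • x :=
  Integrable.coeFn_toL1 _

lemma tensorL1_zero (f : Lp ℝ 1 mu01) : tensorL1 f (0 : X) = 0 := by
  apply Lp.ext (p := 1) (μ := mu01)
  filter_upwards [coeFn_tensorL1 f (0 : X), Lp.coeFn_zero X 1 mu01] with s h1 h2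
  rw [h1, h2]; simp

lemma tensorL1_add (f : Lp ℝ 1 mu01) (x y : X) :
    tensorL1 f (x + y) = tensorL1 f x + tensorL1 f y := by
  apply Lp.ext (p := 1) (μ := mu01)
  filter_upwards [coeFn_tensorL1 f (x + y), Lp.coeFn_add (tensorL1 f x) (tensorL1 f y),
    coeFn_tensorL1 f x, coeFn_tensorL1 f y] with s h1 h2 h3 h4
  rw [h1, h2, Pi.add_apply, h3, h4, smul_add]

lemma tensorL1_smul (f : Lp ℝ 1 mu01) (c : ℝ) (x : X) :
    tensorL1 f (c • x) = c • tensorL1 f x := by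
  apply Lp.ext (p := 1) (μ := mu01)
  filter_upwards [coeFn_tensorL1 f (c • x), Lp.coeFn_smul c (tensorL1 f x),
    coeFn_tensorL1 f x] with s h1 h2 h3
  rw [h1, h2, Pi.smul_apply, h3, smul_comm]

lemma tensorL1_sum {ι : Type*} (s : Finset ι) (f : Lp ℝ 1 mu01) (v : ι → X) :
    tensorL1 f (∑ i ∈ s, v i) = ∑ i ∈ s, tensorL1 f (v i) := by
  classical
  induction s using Finset.induction with
  | empty => simpa using tensorL1_zero f
  | insert _ _ h ih => rw [Finset.sum_insert h, tensorL1_add, ih, Finset.sum_insert h]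

lemma entryFun_eq (T : Lp X 1 mu01 →L[ℝ] Lp X 1 mu01) (g : X →L[ℝ] ℝ) (x : X)
    (f : Lp ℝ 1 mu01) :
    entryFun T g x f = (g.compLpL 1 mu01) (T (tensorL1 f x)) :=
  Lp.ext ((Integrable.coeFn_toL1 _).trans (ContinuousLinearMap.coeFn_compLpL g _).symm)

lemma compLpL_tensorL1 (g : X →L[ℝ] ℝ) (h : Lp ℝ 1 mu01) (x : X) :
    (g.compLpL 1 mu01) (tensorL1 h x) = g x • h := by
  apply Lp.ext (p := 1) (μ := mu01)
  filter_upwards [ContinuousLinearMap.coeFn_compLpL g (tensorL1 h x), coeFn_tensorL1 h x,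
    Lp.coeFn_smul (g x) h] with s h1 h2 h3
  rw [h1, h2, h3, Pi.smul_apply, ContinuousLinearMap.map_smul, smul_eq_mul, smul_eq_mul, mul_comm]

end AuxLp

/- ### Dyadic interval facts -/

lemma two_pow_pos' (n : ℕ) : (0 : ℝ) < 2 ^ n := by positivity

lemma left_mem_dyI (n i : ℕ) : ((i : ℝ) / 2 ^ n) ∈ dyI n i := by
  refine ⟨le_refl _, ?_⟩
  have h2 : (0 : ℝ) < 2 ^ n := two_pow_pos' n
  rw [div_lt_div_iff₀ h2 h2]
  nlinarith

lemma dyI_subset_left (n i : ℕ) : dyI (n + 1) (2 * i) ⊆ dyI n i := by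
  have h2 : (0 : ℝ) < 2 ^ n := two_pow_pos' n
  have h2' : (0 : ℝ) < 2 ^ (n + 1) := two_pow_pos' (n + 1)
  apply Set.Ico_subset_Ico
  · rw [div_le_div_iff₀ h2 h2', pow_succ]; push_cast; ring_nf; nlinarith
  · rw [div_le_div_iff₀ h2' h2, pow_succ]; push_cast; nlinarith

lemma dyI_subset_right (n i : ℕ) : dyI (n + 1) (2 * i + 1) ⊆ dyI n i := by
  have h2 : (0 : ℝ) < 2 ^ n := two_pow_pos' n
  have h2' : (0 : ℝ) < 2 ^ (n + 1) := two_pow_pos' (n + 1)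
  apply Set.Ico_subset_Ico
  · rw [div_le_div_iff₀ h2 h2', pow_succ]; push_cast; nlinarith
  · rw [div_le_div_iff₀ h2' h2, pow_succ]; push_cast; nlinarith

lemma dyI_disjoint {m k k' : ℕ} (h : k ≠ k') : Disjoint (dyI m k) (dyI m k') := by
  have h2 : (0 : ℝ) < 2 ^ m := two_pow_pos' m
  wlog hlt : k < k' generalizing k k'
  · exact (this h.symm ((h.lt_or_gt).resolve_left hlt)).symm
  rw [Set.disjoint_left]
  rintro x ⟨_, hx2⟩ ⟨hx3, _⟩
  have hle : ((k : ℝ) + 1) / 2 ^ m ≤ (k' : ℝ) / 2 ^ m := by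
    rw [div_le_div_iff₀ h2 h2]
    have : (k : ℝ) + 1 ≤ k' := by exact_mod_cast hlt
    nlinarith
  linarith

lemma haarFn_support {n i : ℕ} {x : ℝ} (h : haarFn n i x ≠ 0) : x ∈ dyI n i := by
  unfold haarFn at h
  split_ifs at h with h1 h2
  · exact dyI_subset_left n i h1
  · exact dyI_subset_right n i h2
  · exact absurd rfl h

lemma haarFn_eq (n i : ℕ) :
    haarFn n i = (dyI (n + 1) (2 * i)).indicator 1 - (dyI (n + 1) (2 * i + 1)).indicator 1 := by
  funext x
  have hd : x ∈ dyI (n + 1) (2 * i) → x ∉ dyI (n + 1) (2 * i + 1) := fun hA =>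
    Set.disjoint_left.mp (dyI_disjoint (by omega)) hA
  simp only [haarFn, Pi.sub_apply]
  by_cases hA : x ∈ dyI (n + 1) (2 * i)
  · simp [hA, Set.indicator_of_mem, Set.indicator_of_notMem (hd hA)]
  · by_cases hB : x ∈ dyI (n + 1) (2 * i + 1)
    · simp [hA, hB, Set.indicator_of_mem, Set.indicator_of_notMem]
    · simp [hA, hB, Set.indicator_of_notMem]

lemma haarFn_sq (n i : ℕ) (x : ℝ) : haarFn n i x * haarFn n i x =
    (dyI (n + 1) (2 * i)).indicator 1 x + (dyI (n + 1) (2 * i + 1)).indicator 1 x := by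
  have hd : x ∈ dyI (n + 1) (2 * i) → x ∉ dyI (n + 1) (2 * i + 1) := fun hA =>
    Set.disjoint_left.mp (dyI_disjoint (by omega)) hA
  simp only [haarFn]
  by_cases hA : x ∈ dyI (n + 1) (2 * i)
  · simp [hA, Set.indicator_of_mem, Set.indicator_of_notMem (hd hA)]
  · by_cases hB : x ∈ dyI (n + 1) (2 * i + 1)
    · simp [hA, hB, Set.indicator_of_mem, Set.indicator_of_notMem]
    · simp [hA, hB, Set.indicator_of_notMem]

/- ### dyadicSpan membership -/

lemma indicator_dyI_mem (n i : ℕ) (h : i < 2 ^ n) :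
    (dyI n i).indicator (1 : ℝ → ℝ) ∈ dyadicSpan :=
  Submodule.subset_span ⟨n, i, h, rfl⟩

lemma haarFn_mem (n i : ℕ) (h : i < 2 ^ n) : haarFn n i ∈ dyadicSpan := by
  rw [haarFn_eq]
  have h1 : 2 * i < 2 ^ (n + 1) := by rw [pow_succ]; omega
  have h2 : 2 * i + 1 < 2 ^ (n + 1) := by rw [pow_succ]; omega
  exact sub_mem (indicator_dyI_mem _ _ h1) (indicator_dyI_mem _ _ h2)

lemma hGamma_eq (Γ : Finset (ℕ × ℕ)) (θ : ℕ × ℕ → Bool) :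
    hGamma Γ θ = ∑ J ∈ Γ, (if θ J then (1 : ℝ) else -1) • haarFn J.1 J.2 := by
  funext x
  simp only [hGamma, Finset.sum_apply, Pi.smul_apply, smul_eq_mul]

lemma norm_j_ne_zero {X : Type*} [NormedAddCommGroup X] [NormedSpace ℝ X]
    (H : HaarSystemSpace X) {f : ℝ → ℝ} (hf : f ∈ dyadicSpan) (hf0 : f ≠ 0) :
    ‖H.j f‖ ≠ 0 := by
  rw [H.norm_j f hf]
  exact fun h0 => hf0 (H.hn.eq_zero f hf h0)

lemma indicator_dyI_ne_zero (n i : ℕ) : (dyI n i).indicator (1 : ℝ → ℝ) ≠ 0 := by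
  intro h
  have := congrFun h ((i : ℝ) / 2 ^ n)
  rw [Set.indicator_of_mem (left_mem_dyI n i)] at this
  simpa using this

lemma indicator_GammaStar_eq (Γ : Finset (ℕ × ℕ))
    (hdisj : ∀ J ∈ Γ, ∀ J' ∈ Γ, J ≠ J' → Disjoint (dyI J.1 J.2) (dyI J'.1 J'.2)) :
    (GammaStar Γ).indicator (1 : ℝ → ℝ) = ∑ J ∈ Γ, (dyI J.1 J.2).indicator 1 := by
  classical
  funext x
  rw [Finset.sum_apply]
  by_cases hx : x ∈ GammaStar Γ
  · obtain ⟨J₀, hJ₀, hxJ₀⟩ : ∃ J₀ ∈ Γ, x ∈ dyI J₀.1 J₀.2 := by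
      simpa [GammaStar] using hx
    rw [Set.indicator_of_mem hx, Finset.sum_eq_single_of_mem J₀ hJ₀]
    · simp [Set.indicator_of_mem hxJ₀]
    · intro J hJ hne
      have : x ∉ dyI J.1 J.2 := fun hxJ =>
        Set.disjoint_left.mp (hdisj J hJ J₀ hJ₀ hne) hxJ hxJ₀
      simp [Set.indicator_of_notMem this]
  · rw [Set.indicator_of_notMem hx]
    refine (Finset.sum_eq_zero fun J hJ => ?_).symm
    have : x ∉ dyI J.1 J.2 := fun hxJ => hx (Set.mem_biUnion hJ hxJ)
    simp [Set.indicator_of_notMem this]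

/- ### integral computations -/

lemma volume_dyI (n i : ℕ) : volume (dyI n i) = ENNReal.ofReal (1 / 2 ^ n) := by
  rw [dyI, Real.volume_Ico]
  congr 1
  field_simp
  ring

lemma integral_indicator_dyI (n i : ℕ) :
    ∫ x, (dyI n i).indicator (1 : ℝ → ℝ) x = 1 / 2 ^ n := by
  rw [MeasureTheory.integral_indicator_one (show MeasurableSet (dyI n i) from measurableSet_Ico),
    measureReal_def, volume_dyI, ENNReal.toReal_ofReal (by positivity)]

lemma integrable_indicator_dyI (n i : ℕ) :
    Integrable ((dyI n i).indicator (1 : ℝ → ℝ)) := by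
  rw [integrable_indicator_iff (show MeasurableSet (dyI n i) from measurableSet_Ico)]
  refine (integrableOn_const_iff (C := (1 : ℝ))).mpr (Or.inr ?_)
  rw [volume_dyI]
  exact ENNReal.ofReal_lt_top

lemma integral_hGamma_mul (Γ : Finset (ℕ × ℕ)) (θ : ℕ × ℕ → Bool)
    (hdisj : ∀ J ∈ Γ, ∀ J' ∈ Γ, J ≠ J' → Disjoint (dyI J.1 J.2) (dyI J'.1 J'.2))
    {J : ℕ × ℕ} (hJ : J ∈ Γ) :
    ∫ x, hGamma Γ θ x * haarFn J.1 J.2 x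
      = (if θ J then (1 : ℝ) else -1) * (1 / 2 ^ J.1) := by
  classical
  have hpt : ∀ x, hGamma Γ θ x * haarFn J.1 J.2 x
      = (if θ J then (1 : ℝ) else -1) *
        ((dyI (J.1 + 1) (2 * J.2)).indicator 1 x
          + (dyI (J.1 + 1) (2 * J.2 + 1)).indicator 1 x) := by
    intro x
    simp only [hGamma]
    rw [Finset.sum_mul, Finset.sum_eq_single J]
    · rw [mul_assoc, haarFn_sq]
    · intro J' hJ' hne
      rcases eq_or_ne (haarFn J.1 J.2 x) 0 with h0 | h0
      · simp [h0]
      · have hx := haarFn_support h0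
        have hz : haarFn J'.1 J'.2 x = 0 := by
          by_contra h1
          exact Set.disjoint_left.mp (hdisj J' hJ' J hJ hne) (haarFn_support h1) hx
        simp [hz]
    · intro h; exact absurd hJ h
  simp_rw [hpt]
  rw [MeasureTheory.integral_const_mul,
    integral_add (integrable_indicator_dyI _ _) (integrable_indicator_dyI _ _),
    integral_indicator_dyI, integral_indicator_dyI]
  congr 1
  rw [pow_succ]
  field_simp
  ring

theorem statement17 {X : Type*} [NormedAddCommGroup X] [NormedSpace ℝ X]
    (H : HaarSystemSpace X)
    (T : Lp X 1 mu01 →L[ℝ] Lp X 1 mu01)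
    (TL : Option (ℕ × ℕ) → Lp ℝ 1 mu01 → Lp ℝ 1 mu01)
    (hdiag : ∀ L, validIdx L → ∀ f : Lp ℝ 1 mu01,
      T (tensorL1 f (H.e L)) = tensorL1 (TL L f) (H.e L))
    (Γ : Finset (ℕ × ℕ)) (hne : Γ.Nonempty) (hval : ∀ J ∈ Γ, J.2 < 2 ^ J.1)
    (hdisj : ∀ J ∈ Γ, ∀ J' ∈ Γ, J ≠ J' → Disjoint (dyI J.1 J.2) (dyI J'.1 J'.2))
    (θ : ℕ × ℕ → Bool) (g : X →L[ℝ] ℝ)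
    (hg : ∀ f ∈ dyadicSpan, g (H.j f) =
      (‖H.j ((GammaStar Γ).indicator 1)‖ / lenGamma Γ) * ∫ x, hGamma Γ θ x * f x)
    (f : Lp ℝ 1 mu01) :
    entryFun T g (‖H.j ((GammaStar Γ).indicator 1)‖⁻¹ • H.j (hGamma Γ θ)) f =
      ∑ J ∈ Γ, ((1 / 2 ^ J.1 : ℝ) / lenGamma Γ) • TL (some J) f := by
  classical
  have hχ : ∀ J ∈ Γ, ‖H.j ((dyI J.1 J.2).indicator 1)‖ ≠ 0 := fun J hJ =>
    norm_j_ne_zero H (indicator_dyI_mem _ _ (hval J hJ)) (indicator_dyI_ne_zero _ _)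
  have hκmem : (GammaStar Γ).indicator (1 : ℝ → ℝ) ∈ dyadicSpan := by
    rw [indicator_GammaStar_eq Γ hdisj]
    exact Submodule.sum_mem _ fun J hJ => indicator_dyI_mem _ _ (hval J hJ)
  have hκne : (GammaStar Γ).indicator (1 : ℝ → ℝ) ≠ 0 := by
    intro h
    obtain ⟨J₀, hJ₀⟩ := hne
    have hx : ((J₀.2 : ℝ) / 2 ^ J₀.1) ∈ GammaStar Γ :=
      Set.mem_biUnion hJ₀ (left_mem_dyI J₀.1 J₀.2)
    have := congrFun h ((J₀.2 : ℝ) / 2 ^ J₀.1)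
    rw [Set.indicator_of_mem hx] at this
    simpa using this
  have hκ : ‖H.j ((GammaStar Γ).indicator 1)‖ ≠ 0 := norm_j_ne_zero H hκmem hκne
  set κ := ‖H.j ((GammaStar Γ).indicator 1)‖ with hκdef
  have heJ : ∀ J : ℕ × ℕ, H.e (some J)
      = ‖H.j ((dyI J.1 J.2).indicator 1)‖⁻¹ • H.j (haarFn J.1 J.2) := by
    rintro ⟨n, i⟩; rfl
  have hvalJ : ∀ J ∈ Γ, validIdx (some J) := by
    rintro ⟨n, i⟩ hJ; exact hval _ hJ
  have hgJ : ∀ J ∈ Γ, g (H.e (some J)) = ‖H.j ((dyI J.1 J.2).indicator 1)‖⁻¹ *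
      ((κ / lenGamma Γ) * ((if θ J then (1 : ℝ) else -1) * (1 / 2 ^ J.1))) := by
    intro J hJ
    rw [heJ J, ContinuousLinearMap.map_smul, smul_eq_mul, hg (haarFn J.1 J.2) (haarFn_mem _ _ (hval J hJ)),
      integral_hGamma_mul Γ θ hdisj hJ]
  have hx0 : (κ⁻¹ • H.j (hGamma Γ θ)) = ∑ J ∈ Γ,
      ((κ⁻¹ * (if θ J then (1 : ℝ) else -1)) * ‖H.j ((dyI J.1 J.2).indicator 1)‖) •
        H.e (some J) := by
    rw [hGamma_eq, map_sum, Finset.smul_sum]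
    refine Finset.sum_congr rfl fun J hJ => ?_
    rw [_root_.map_smul, heJ J, smul_smul, smul_smul]
    congr 1
    rw [mul_assoc, mul_inv_cancel₀ (hχ J hJ), mul_one]
  rw [entryFun_eq, hx0, tensorL1_sum, map_sum, map_sum]
  refine Finset.sum_congr rfl fun J hJ => ?_
  rw [tensorL1_smul, ContinuousLinearMap.map_smul, hdiag (some J) (hvalJ J hJ) f,
    ContinuousLinearMap.map_smul, compLpL_tensorL1,
    smul_smul, hgJ J hJ]
  congr 1
  have h1 : ‖H.j ((dyI J.1 J.2).indicator 1)‖ ≠ 0 := hχ J hJ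
  have hss : (if θ J = true then (1 : ℝ) else -1) * (if θ J = true then (1 : ℝ) else -1) = 1 := by
    split_ifs <;> norm_num
  have key : ∀ a b s L p : ℝ, a⁻¹ * a = 1 → b * b⁻¹ = 1 → s * s = 1 →
      a⁻¹ * s * b * (b⁻¹ * (a / L * (s * (1 / p)))) = 1 / p / L := by
    intro a b s L p e1 e2 e3
    calc a⁻¹ * s * b * (b⁻¹ * (a / L * (s * (1 / p))))
        = (a⁻¹ * a) * ((b * b⁻¹) * ((s * s) * (1 / p / L))) := by ring
      _ = 1 / p / L := by rw [e1, e2, e3]; ring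
  exact key κ _ _ _ _ (inv_mul_cancel₀ hκ) (mul_inv_cancel₀ h1) hss


end
end
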